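/- Let h: [0,∞) → (0,∞) be C², decreasing, convex, integrable, tending to 0 at infinity, with β function satisfying sup β ≤ 1 (equivalently h is log-concave). Define g(x) = (2/9)·(1/h(x))·∫_x^∞ h(x')/x'^{5/3} dx'. Then g is monotonically decreasing on (0,∞). -/

import Mathlib

open MeasureTheory

set_option maxHeartbeats 1600000 in
/-- Let `h : [0,∞) → (0,∞)` be C², decreasing, convex, integrable, tending to `0` at
infinity, with β function bounded by `1`. Then
`g(x) = (2/9)·(1/h(x))·∫_x^∞ h(x')/x'^{5/3} dx'` is monotonically decreasing on
`(0,∞)`. -/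
theorem stmt_13 (h h' h'' : ℝ → ℝ)
    (hpos : ∀ x ≥ (0:ℝ), 0 < h x)
    (hd1 : ∀ x ≥ (0:ℝ), HasDerivAt h (h' x) x)
    (hd2 : ∀ x ≥ (0:ℝ), HasDerivAt h' (h'' x) x)
    (hc : ContinuousOn h'' (Set.Ici 0))
    (hdec : ∀ x ≥ (0:ℝ), h' x < 0)
    (hconv : ∀ x ≥ (0:ℝ), 0 ≤ h'' x)
    (hint : IntegrableOn h (Set.Ici 0))
    (hlim : Filter.Tendsto h Filter.atTop (nhds 0))
    (hbeta : ∀ x ≥ (0:ℝ), h'' x * h x / (h' x) ^ 2 ≤ 1)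
    (g : ℝ → ℝ)
    (hg : g = fun x => (2/9) * (1 / h x) * ∫ t in Set.Ioi x, h t / t ^ ((5:ℝ)/3)) :
    AntitoneOn g (Set.Ioi 0) := by
  subst hg
  set φ : ℝ → ℝ := fun t => h t / t ^ ((5:ℝ)/3) with hφ
  set F : ℝ → ℝ := fun x => ∫ t in Set.Ioi x, φ t with hF
  -- continuity of φ at positive points
  have hφcont : ∀ t > (0:ℝ), ContinuousAt φ t := by
    intro t ht
    exact ((hd1 t ht.le).continuousAt).div
      (Real.continuousAt_rpow_const t _ (Or.inl (ne_of_gt ht)))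
      (ne_of_gt (Real.rpow_pos_of_pos ht _))
  -- integrability of φ on Ioi a for a > 0
  have hφint : ∀ a > (0:ℝ), IntegrableOn φ (Set.Ioi a) := by
    intro a ha
    have hmeas : AEStronglyMeasurable φ (volume.restrict (Set.Ioi a)) := by
      refine ContinuousOn.aestronglyMeasurable ?_ measurableSet_Ioi
      exact fun t ht => (hφcont t (lt_trans ha ht)).continuousWithinAt
    have hb : Integrable (fun t => (a ^ ((5:ℝ)/3))⁻¹ * h t)
        (volume.restrict (Set.Ioi a)) :=
      ((hint.mono_set (fun t (ht : t ∈ Set.Ioi a) => le_of_lt (lt_of_lt_of_le ha ht.out.le))).const_mul _)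
    refine hb.mono' hmeas ?_
    refine (ae_restrict_iff' measurableSet_Ioi).2 (Filter.Eventually.of_forall ?_)
    intro t ht
    have hta : a < t := ht
    have ht0 : 0 < t := lt_trans ha hta
    have hrp : (0:ℝ) < a ^ ((5:ℝ)/3) := Real.rpow_pos_of_pos ha _
    have hrt : a ^ ((5:ℝ)/3) ≤ t ^ ((5:ℝ)/3) :=
      Real.rpow_le_rpow ha.le hta.le (by norm_num)
    have hht : 0 < h t := hpos t ht0.le
    have : ‖φ t‖ = h t / t ^ ((5:ℝ)/3) := by
      rw [Real.norm_eq_abs, abs_of_nonneg]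
      exact div_nonneg hht.le (Real.rpow_pos_of_pos ht0 _).le
    rw [this]
    rw [div_eq_mul_inv, mul_comm]
    exact mul_le_mul_of_nonneg_right (by
      exact inv_anti₀ hrp hrt) hht.le
  -- r = h'/h is antitone on Ici 0
  have hrderiv : ∀ t ≥ (0:ℝ), HasDerivAt (fun s => h' s / h s)
      ((h'' t * h t - h' t * h' t) / h t ^ 2) t :=
    fun t ht => (hd2 t ht).div (hd1 t ht) (ne_of_gt (hpos t ht))
  have hranti : AntitoneOn (fun s => h' s / h s) (Set.Ici 0) := by
    refine antitoneOn_of_deriv_nonpos (convex_Ici 0)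
      (fun t ht => (hrderiv t ht).continuousAt.continuousWithinAt) ?_ ?_
    · rw [interior_Ici]
      exact fun t ht => (hrderiv t (le_of_lt ht)).differentiableAt.differentiableWithinAt
    · rw [interior_Ici]
      intro t ht
      rw [(hrderiv t ht.le).deriv]
      have hsq : (0:ℝ) < h' t ^ 2 := by nlinarith [hdec t ht.le]
      have h1 : h'' t * h t ≤ h' t ^ 2 := by
        have := hbeta t ht.le
        calc h'' t * h t = h'' t * h t / h' t ^ 2 * h' t ^ 2 := by
              rw [div_mul_cancel₀ _ hsq.ne']
          _ ≤ 1 * h' t ^ 2 := by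
              exact mul_le_mul_of_nonneg_right this hsq.le
          _ = h' t ^ 2 := one_mul _
      apply div_nonpos_of_nonpos_of_nonneg
      · nlinarith [sq_nonneg (h' t)]
      · positivity
  -- pointwise log-concavity bound
  have hptw : ∀ x > (0:ℝ), ∀ t ≥ x, h t ≤ h x * Real.exp (h' x / h x * (t - x)) := by
    intro x hx t hxt
    set lam := h' x / h x with hlam
    have huderiv : ∀ s ≥ x, HasDerivAt (fun y => Real.log (h y) - lam * y)
        (h' s / h s - lam) s := by
      intro s hs
      have hs0 : (0:ℝ) ≤ s := le_trans hx.le hs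
      have h1 : HasDerivAt (fun y => Real.log (h y)) (h' s / h s) s :=
        (hd1 s hs0).log (ne_of_gt (hpos s hs0))
      have h2 : HasDerivAt (fun y => lam * y) lam s := by
        simpa using (hasDerivAt_id s).const_mul lam
      exact h1.sub h2
    have huanti : AntitoneOn (fun y => Real.log (h y) - lam * y) (Set.Ici x) := by
      refine antitoneOn_of_deriv_nonpos (convex_Ici x)
        (fun s hs => (huderiv s hs).continuousAt.continuousWithinAt) ?_ ?_
      · rw [interior_Ici]
        exact fun s hs => (huderiv s (le_of_lt hs)).differentiableAt.differentiableWithinAt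
      · rw [interior_Ici]
        intro s hs
        rw [(huderiv s (le_of_lt hs)).deriv]
        have : h' s / h s ≤ h' x / h x :=
          hranti (Set.mem_Ici.2 hx.le) (Set.mem_Ici.2 (le_trans hx.le hs.le)) hs.le
        simpa [hlam] using sub_nonpos.2 this
    have := huanti (Set.self_mem_Ici) (Set.mem_Ici.2 hxt) hxt
    have hlog : Real.log (h t) ≤ Real.log (h x) + lam * (t - x) := by
      dsimp at this; linarith
    have ht0 : (0:ℝ) < t := lt_of_lt_of_le hx hxt
    calc h t = Real.exp (Real.log (h t)) := (Real.exp_log (hpos t ht0.le)).symm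
      _ ≤ Real.exp (Real.log (h x) + lam * (t - x)) := Real.exp_le_exp.2 hlog
      _ = h x * Real.exp (lam * (t - x)) := by
          rw [Real.exp_add, Real.exp_log (hpos x hx.le)]
  -- exponential integral
  have hexp : ∀ x > (0:ℝ),
      (∫ t in Set.Ioi x, Real.exp (h' x / h x * (t - x))) = h x / (-(h' x)) := by
    intro x hx
    set lam := h' x / h x with hlam
    have hlamneg : lam < 0 :=
      div_neg_of_neg_of_pos (hdec x hx.le) (hpos x hx.le)
    have hderivE : ∀ t ∈ Set.Ioi x, HasDerivAt (fun s => lam⁻¹ * Real.exp (lam * (s - x)))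
        (Real.exp (lam * (t - x))) t := by
      intro t _
      have h1 : HasDerivAt (fun s => lam * (s - x)) lam t := by
        simpa using ((hasDerivAt_id t).sub_const x).const_mul lam
      have h2 := (h1.exp).const_mul lam⁻¹
      have hne : lam ≠ 0 := ne_of_lt hlamneg
      have heq : lam⁻¹ * (Real.exp (lam * (t - x)) * lam) = Real.exp (lam * (t - x)) := by
        field_simp
      rwa [heq] at h2
    have hEint : IntegrableOn (fun t => Real.exp (lam * (t - x))) (Set.Ioi x) := by
      have h0 : IntegrableOn (fun t => Real.exp (-(-lam) * t)) (Set.Ioi x) :=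
        exp_neg_integrableOn_Ioi x (by linarith)
      have h1 : IntegrableOn (fun t => Real.exp (-(-lam) * t) * Real.exp (-(lam * x)))
          (Set.Ioi x) := h0.mul_const (Real.exp (-(lam * x)))
      refine IntegrableOn.congr_fun h1 ?_ measurableSet_Ioi
      intro t _
      simp only [← Real.exp_add]
      congr 1
      ring
    have htend : Filter.Tendsto (fun s => lam⁻¹ * Real.exp (lam * (s - x)))
        Filter.atTop (nhds 0) := by
      have h1 : Filter.Tendsto (fun s : ℝ => lam * (s - x)) Filter.atTop Filter.atBot := by
        have h2 : Filter.Tendsto (fun s : ℝ => s - x) Filter.atTop Filter.atTop :=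
          Filter.tendsto_atTop_add_const_right _ (-x) Filter.tendsto_id
        exact Filter.Tendsto.const_mul_atTop_of_neg hlamneg h2
      have h3 := (Real.tendsto_exp_atBot).comp h1
      have h4 := h3.const_mul lam⁻¹
      simpa using h4
    have hcont : ContinuousWithinAt (fun s => lam⁻¹ * Real.exp (lam * (s - x)))
        (Set.Ici x) x := by
      have : Continuous fun s => lam⁻¹ * Real.exp (lam * (s - x)) := by continuity
      exact this.continuousWithinAt
    have := integral_Ioi_of_hasDerivAt_of_tendsto hcont hderivE hEint htend
    rw [this]
    simp only [zero_sub, sub_self, mul_zero, Real.exp_zero, mul_one]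
    rw [hlam]
    field_simp
  -- key bound on F
  have hkey : ∀ x > (0:ℝ), (-(h' x)) * F x ≤ h x ^ 2 / x ^ ((5:ℝ)/3) := by
    intro x hx
    have hhx : 0 < h x := hpos x hx.le
    have hh'x : h' x < 0 := hdec x hx.le
    have hxr : (0:ℝ) < x ^ ((5:ℝ)/3) := Real.rpow_pos_of_pos hx _
    set lam := h' x / h x with hlam
    have hEint : IntegrableOn
        (fun t => h x / x ^ ((5:ℝ)/3) * Real.exp (lam * (t - x))) (Set.Ioi x) := by
      have h0 : IntegrableOn (fun t => Real.exp (-(-lam) * t)) (Set.Ioi x) :=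
        exp_neg_integrableOn_Ioi x (by
          have : lam < 0 := div_neg_of_neg_of_pos hh'x hhx
          linarith)
      have h1 : IntegrableOn
          (fun t => h x / x ^ ((5:ℝ)/3) * (Real.exp (-(-lam) * t) * Real.exp (-(lam * x))))
          (Set.Ioi x) := (h0.mul_const (Real.exp (-(lam * x)))).const_mul (h x / x ^ ((5:ℝ)/3))
      refine IntegrableOn.congr_fun h1 ?_ measurableSet_Ioi
      intro t _
      simp only [← Real.exp_add]
      congr 1
      ring
    have hmono : F x ≤ ∫ t in Set.Ioi x,
        h x / x ^ ((5:ℝ)/3) * Real.exp (lam * (t - x)) := by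
      refine setIntegral_mono_on (hφint x hx) hEint measurableSet_Ioi ?_
      intro t ht
      have hxt : x < t := ht
      have ht0 : 0 < t := lt_trans hx hxt
      have htr : x ^ ((5:ℝ)/3) ≤ t ^ ((5:ℝ)/3) :=
        Real.rpow_le_rpow hx.le hxt.le (by norm_num)
      have hnum : h t ≤ h x * Real.exp (lam * (t - x)) := hptw x hx t hxt.le
      calc φ t = h t / t ^ ((5:ℝ)/3) := rfl
        _ ≤ (h x * Real.exp (lam * (t - x))) / x ^ ((5:ℝ)/3) :=
            div_le_div₀ (mul_nonneg hhx.le (Real.exp_pos _).le) hnum hxr htr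
        _ = h x / x ^ ((5:ℝ)/3) * Real.exp (lam * (t - x)) := by ring
    have hI : (∫ t in Set.Ioi x, h x / x ^ ((5:ℝ)/3) * Real.exp (lam * (t - x)))
        = h x / x ^ ((5:ℝ)/3) * (h x / (-(h' x))) := by
      rw [integral_const_mul, hexp x hx]
    rw [hI] at hmono
    have h'ne : h' x ≠ 0 := ne_of_lt hh'x
    have hxrne : x ^ ((5:ℝ)/3) ≠ 0 := ne_of_gt hxr
    have h2 : F x ≤ h x ^ 2 / (x ^ ((5:ℝ)/3) * (-(h' x))) := by
      have : h x / x ^ ((5:ℝ)/3) * (h x / (-(h' x)))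
          = h x ^ 2 / (x ^ ((5:ℝ)/3) * (-(h' x))) := by
        field_simp
      linarith [hmono, this.symm.le]
    calc (-(h' x)) * F x ≤ (-(h' x)) * (h x ^ 2 / (x ^ ((5:ℝ)/3) * (-(h' x)))) :=
          mul_le_mul_of_nonneg_left h2 (by linarith)
      _ = h x ^ 2 / x ^ ((5:ℝ)/3) := by
          field_simp
  -- derivative of F
  have hFderiv : ∀ x > (0:ℝ), HasDerivAt F (-(φ x)) x := by
    intro x hx
    set a := x / 2 with ha
    have ha0 : 0 < a := by positivity
    have hax : a < x := by simp [ha]; linarith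
    have hia : IntegrableOn φ (Set.Ioi a) := hφint a ha0
    have heq : ∀ y ∈ Set.Ioi a, F y = (∫ t in Set.Ioi a, φ t) - ∫ t in a..y, φ t := by
      intro y hy
      have hay : a ≤ y := le_of_lt hy
      have hsplit : (∫ t in Set.Ioi a, φ t) =
          (∫ t in Set.Ioc a y, φ t) + ∫ t in Set.Ioi y, φ t := by
        rw [← setIntegral_union (Set.Ioc_disjoint_Ioi le_rfl) measurableSet_Ioi
          (hia.mono_set Set.Ioc_subset_Ioi_self)
          (hia.mono_set (Set.Ioi_subset_Ioi hay))]
        rw [Set.Ioc_union_Ioi_eq_Ioi hay]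
      rw [intervalIntegral.integral_of_le hay]
      simp only [hF]
      rw [hsplit]
      ring
    have hmem : Set.Ioi a ∈ nhds x := Ioi_mem_nhds hax
    have hD : HasDerivAt (fun y => ∫ t in a..y, φ t) (φ x) x := by
      refine intervalIntegral.integral_hasDerivAt_right ?_ ?_ (hφcont x hx)
      · rw [intervalIntegrable_iff_integrableOn_Ioc_of_le hax.le]
        exact hia.mono_set Set.Ioc_subset_Ioi_self
      · exact ContinuousAt.stronglyMeasurableAtFilter isOpen_Ioi
          (fun t ht => hφcont t ht) x hx
    have hD2 : HasDerivAt (fun y => (∫ t in Set.Ioi a, φ t) - ∫ t in a..y, φ t)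
        (-(φ x)) x := by
      exact ((hasDerivAt_const x (∫ t in Set.Ioi a, φ t)).sub hD).congr_deriv (by simp)
    refine hD2.congr_of_eventuallyEq ?_
    exact Filter.eventuallyEq_of_mem hmem heq
  -- derivative of g and conclusion
  have hgderiv : ∀ x > (0:ℝ), HasDerivAt
      (fun x => (2/9 : ℝ) * (1 / h x) * ∫ t in Set.Ioi x, h t / t ^ ((5:ℝ)/3))
      ((2/9) * ((-(h' x) / h x ^ 2) * F x + (1 / h x) * (-(φ x)))) x := by
    intro x hx
    have hinv : HasDerivAt (fun y => 1 / h y) (-(h' x) / h x ^ 2) x := by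
      have := (hd1 x hx.le).inv (ne_of_gt (hpos x hx.le))
      simp only [one_div]
      exact this
    have hprod := hinv.mul (hFderiv x hx)
    have := hprod.const_mul (2/9 : ℝ)
    convert this using 2
    · rfl
    · rfl
    · simp only [Pi.mul_apply, hF, hφ]
      ring
  refine antitoneOn_of_deriv_nonpos (convex_Ioi 0) ?_ ?_ ?_
  · exact fun x hx => (hgderiv x hx).continuousAt.continuousWithinAt
  · rw [interior_Ioi]
    exact fun x hx => (hgderiv x hx).differentiableAt.differentiableWithinAt
  · rw [interior_Ioi]
    intro x hx
    rw [(hgderiv x hx).deriv]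
    have hhx : 0 < h x := hpos x hx.le
    have hxr : (0:ℝ) < x ^ ((5:ℝ)/3) := Real.rpow_pos_of_pos hx _
    have hk := hkey x hx
    have h1 : (1 / h x) * (-(φ x)) = -(x ^ ((5:ℝ)/3))⁻¹ := by
      simp only [hφ]
      field_simp
    have h2 : (-(h' x) / h x ^ 2) * F x ≤ (x ^ ((5:ℝ)/3))⁻¹ := by
      rw [div_mul_eq_mul_div, div_le_iff₀ (by positivity)]
      calc (-(h' x)) * F x ≤ h x ^ 2 / x ^ ((5:ℝ)/3) := hk
        _ = (x ^ ((5:ℝ)/3))⁻¹ * h x ^ 2 := by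
            rw [div_eq_mul_inv, mul_comm]
    rw [h1]
    have : (-(h' x) / h x ^ 2) * F x + -(x ^ ((5:ℝ)/3))⁻¹ ≤ 0 := by linarith
    nlinarith
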